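/- Let (P,≻,q) be a problem, N ⊊ I a proper subset of students, i ∉ N, and (ℓ_j)_{j∈I}, (k_j)_{j∈I} vectors with k_j ≥ ℓ_j > 1 for all j. Let P̂ be the profile where each student j ∈ N reports P_j^{ℓ_j} and each student j ∉ N reports P_j^{k_j}; let μ = GS(P̂, ≻, q) and ν = GS(P_i^{ℓ_i}, P̂_{-i}, ≻, q). Then the number of blocking students for ν under (P,≻,q) is at least the number of blocking students for μ under (P,≻,q). -/

import Mathlib

/-!
School choice framework following Bonkoungou–Nesterov,
"Reforms meet fairness concerns in school and college admissions".

Students `I` and schools `S` are finite types with `|I| > |S|`.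
A strict preference relation of a student over `S ∪ {∅}` is represented by a list
of `Option S` containing every element exactly once (earlier = more preferred);
`none` is the outside option.  A strict priority order of a school is a list of
`I` containing every student exactly once (earlier = higher priority).
-/

namespace SchoolChoice

variable {I S : Type*} [Fintype I] [DecidableEq I] [Fintype S] [DecidableEq S]

/-- `p` is a strict preference relation on `S ∪ {∅}`: a ranking list containing every
element of `Option S` exactly once. -/
def ValidPref (p : List (Option S)) : Prop := p.Nodup ∧ ∀ x : Option S, x ∈ p

/-- `pr` is a strict priority order: a ranking list containing every student exactly once. -/
def ValidPrio (pr : List I) : Prop := pr.Nodup ∧ ∀ i : I, i ∈ pr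

/-- `a` is strictly preferred to `b` under the preference relation `p`. -/
def prefLt (p : List (Option S)) (a b : Option S) : Prop := p.idxOf a < p.idxOf b

/-- `i` has strictly higher priority than `j` under the priority order `pr`. -/
def prioLt (pr : List I) (i j : I) : Prop := pr.idxOf i < pr.idxOf j

instance (p : List (Option S)) (a b : Option S) : Decidable (prefLt p a b) :=
  inferInstanceAs (Decidable (_ < _))

instance (pr : List I) (i j : I) : Decidable (prioLt pr i j) :=
  inferInstanceAs (Decidable (_ < _))

/-- The acceptable schools of `p` (those preferred to the outside option), in preference
order. -/
def acceptables (p : List (Option S)) : List S := (p.takeWhile Option.isSome).filterMap id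

/-- The truncation of `p` after its `k`-th acceptable school: the preference relation
listing, in the same order, only the `min k _` most-preferred acceptable schools of `p`,
all other schools being unacceptable (kept below `none` in their original order). -/
def truncate (p : List (Option S)) (k : ℕ) : List (Option S) :=
  ((acceptables p).take k).map some ++
    none :: p.filter (fun x => decide (x ≠ none ∧ x ∉ ((acceptables p).take k).map some))

/-- `μ` is a matching: it respects the capacities `q`. -/
def IsMatching (q : S → ℕ) (μ : I → Option S) : Prop :=
  ∀ s : S, (Finset.univ.filter (fun i => μ i = some s)).card ≤ q s

/-- The pair `(i, s)` blocks `μ` under the problem `(P, prio, q)`. -/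
def Blocks (P : I → List (Option S)) (prio : S → List I) (q : S → ℕ)
    (μ : I → Option S) (i : I) (s : S) : Prop :=
  prefLt (P i) (some s) (μ i) ∧
    ((Finset.univ.filter (fun j => μ j = some s)).card < q s ∨
      ∃ j : I, μ j = some s ∧ prioLt (prio s) i j)

/-- `i` is a blocking student for `μ` under `(P, prio, q)`. -/
def BlockingStudent (P : I → List (Option S)) (prio : S → List I) (q : S → ℕ)
    (μ : I → Option S) (i : I) : Prop :=
  ∃ s : S, Blocks P prio q μ i s

/-- `μ` is individually rational under `P`. -/
def IndividuallyRational (P : I → List (Option S)) (μ : I → Option S) : Prop :=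
  ∀ i : I, ¬ prefLt (P i) none (μ i)

/-- `μ` is stable at `(P, prio, q)`. -/
def IsStable (P : I → List (Option S)) (prio : S → List I) (q : S → ℕ)
    (μ : I → Option S) : Prop :=
  IndividuallyRational P μ ∧ ∀ i : I, ¬ BlockingStudent P prio q μ i

/-- The number of blocking students for `μ` under `(P, prio, q)`. -/
noncomputable def numBlocking (P : I → List (Option S)) (prio : S → List I) (q : S → ℕ)
    (μ : I → Option S) : ℕ :=
  {i : I | BlockingStudent P prio q μ i}.ncard

/-! ### The Gale–Shapley student-proposing deferred acceptance mechanism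

The state `σ : I → ℕ` records, for each student, how many of her acceptable schools
have already rejected her; she currently applies to the `σ i`-th school on her list
(if any).  At each round every school tentatively keeps the `q s` highest-priority
students among its current applicants and rejects the rest, who move on. -/

/-- The school student `i` currently applies to. -/
def daTarget (P : I → List (Option S)) (σ : I → ℕ) (i : I) : Option S :=
  (acceptables (P i))[σ i]?

/-- The students tentatively held by school `s`: the `q s` highest-priority current
applicants. -/
def daHeld (P : I → List (Option S)) (prio : S → List I) (q : S → ℕ)
    (σ : I → ℕ) (s : S) : List I :=
  ((prio s).filter (fun i => decide (daTarget P σ i = some s))).take (q s)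

/-- One round of deferred acceptance: every rejected student moves to her next choice. -/
def daStep (P : I → List (Option S)) (prio : S → List I) (q : S → ℕ)
    (σ : I → ℕ) : I → ℕ := fun i =>
  match daTarget P σ i with
  | none => σ i
  | some s => if i ∈ daHeld P prio q σ s then σ i else σ i + 1

/-- The Gale–Shapley (student-proposing deferred acceptance) mechanism.  Iterating the
round map `|I| * |S| + 1` times is guaranteed to reach the terminal state. -/
def GS (P : I → List (Option S)) (prio : S → List I) (q : S → ℕ) : I → Option S :=
  fun i =>
    let σ := (daStep P prio q)^[Fintype.card I * Fintype.card S + 1] (fun _ => 0)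
    match daTarget P σ i with
    | none => none
    | some s => if i ∈ daHeld P prio q σ s then some s else none

/-- The constrained Gale–Shapley mechanism `GS^k`. -/
def GSk (k : ℕ) (P : I → List (Option S)) (prio : S → List I) (q : S → ℕ) : I → Option S :=
  GS (fun i => truncate (P i) k) prio q

/-! ### The Boston (immediate acceptance) mechanism -/

/-- Round `t` of the Boston mechanism: each not-yet-accepted student applies to her
`t`-th ranked acceptable school (0-indexed), and each school permanently accepts, up to
its remaining capacity, its highest-priority new applicants. -/
def bostonRound (P : I → List (Option S)) (prio : S → List I) (q : S → ℕ)
    (μ : I → Option S) (t : ℕ) : I → Option S := fun i =>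
  match μ i with
  | some s => some s
  | none =>
    match (acceptables (P i))[t]? with
    | none => none
    | some s =>
      if i ∈ ((prio s).filter
            (fun j => decide (μ j = none ∧ (acceptables (P j))[t]? = some s))).take
          (q s - (Finset.univ.filter (fun j => μ j = some s)).card)
      then some s else none

/-- The Boston (immediate acceptance) mechanism. -/
def Boston (P : I → List (Option S)) (prio : S → List I) (q : S → ℕ) : I → Option S :=
  (List.range (Fintype.card S)).foldl (bostonRound P prio q) (fun _ => none)

/-- The constrained Boston mechanism `β^k`. -/
def Bostonk (k : ℕ) (P : I → List (Option S)) (prio : S → List I) (q : S → ℕ) :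
    I → Option S :=
  Boston (fun i => truncate (P i) k) prio q

/-! ### The first-preference-first mechanism -/

/-- The adjusted priority profile: each first-preference-first school (member of `fpf`)
ranks students first by the rank they assign to it under `P` (counting the ranking of the
outside option as well), ties broken by the original priority; equal-preference schools
keep their original priority. -/
def fpfPrio (fpf : Finset S) (P : I → List (Option S)) (prio : S → List I) : S → List I :=
  fun s =>
    if s ∈ fpf then
      (List.range (Fintype.card S + 1)).flatMap
        (fun r => (prio s).filter (fun i => decide ((P i).idxOf (some s) = r)))
    else prio s

/-- The first-preference-first mechanism with set `fpf` of first-preference-first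
schools: Gale–Shapley run on the adjusted priorities. -/
def FPF (fpf : Finset S) (P : I → List (Option S)) (prio : S → List I) (q : S → ℕ) :
    I → Option S :=
  GS P (fpfPrio fpf P prio) q

/-- The constrained first-preference-first mechanism `FPF^k`. -/
def FPFk (fpf : Finset S) (k : ℕ) (P : I → List (Option S)) (prio : S → List I)
    (q : S → ℕ) : I → Option S :=
  FPF fpf (fun i => truncate (P i) k) prio q

/-! ### Manipulation and equilibrium notions -/

/-- Student `i` is a manipulating student of the mechanism `φ` (with priorities and
capacities fixed) at the true profile `P`. -/
def ManipulatingStudent (φ : (I → List (Option S)) → I → Option S)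
    (P : I → List (Option S)) (i : I) : Prop :=
  ∃ Q : List (Option S), ValidPref Q ∧
    prefLt (P i) (φ (Function.update P i Q) i) (φ P i)

/-- The mechanism `φ` is not manipulable at `P`. -/
def NotManipulable (φ : (I → List (Option S)) → I → Option S)
    (P : I → List (Option S)) : Prop :=
  ∀ i : I, ¬ ManipulatingStudent φ P i

/-- `P'` is a Nash equilibrium of the game `(φ, P)` in which the sophisticated students
are the members of `M` (who may misreport, and best respond) and all other (sincere)
students report truthfully. -/
def NashEq (φ : (I → List (Option S)) → I → Option S) (P : I → List (Option S))
    (M : Finset I) (P' : I → List (Option S)) : Prop :=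
  (∀ i, ValidPref (P' i)) ∧ (∀ i ∉ M, P' i = P i) ∧
    ∀ i ∈ M, ∀ Q : List (Option S), ValidPref Q →
      ¬ prefLt (P i) (φ (Function.update P' i Q) i) (φ P' i)

/-! ### Semi-sophisticated students -/

/-- Student `i` is guaranteed her first choice `s`: `s` is her most-preferred acceptable
school and `i` is among the `q s` highest-priority students at `s`. -/
def GuaranteedFirstChoice (P : I → List (Option S)) (prio : S → List I) (q : S → ℕ)
    (i : I) (s : S) : Prop :=
  (acceptables (P i)).head? = some s ∧ (prio s).idxOf i < q s

instance (P : I → List (Option S)) (prio : S → List I) (q : S → ℕ) (i : I) (s : S) :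
    Decidable (GuaranteedFirstChoice P prio q i s) :=
  inferInstanceAs (Decidable (_ ∧ _))

/-- School `s` is competitive: at least `q s` students are guaranteed their first
choice `s`. -/
def Competitive (P : I → List (Option S)) (prio : S → List I) (q : S → ℕ) (s : S) : Prop :=
  q s ≤ (Finset.univ.filter (fun i => GuaranteedFirstChoice P prio q i s)).card

instance (P : I → List (Option S)) (prio : S → List I) (q : S → ℕ) (s : S) :
    Decidable (Competitive P prio q s) :=
  inferInstanceAs (Decidable (_ ≤ _))

/-- `P'` is a Nash equilibrium of the game `(GS^ℓ, P)` with semi-sophisticated students: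
every student guaranteed her first choice reports truthfully; every other student reports
truthfully if she has at most `ℓ` acceptable schools or all her acceptable schools are
competitive, and otherwise lists as acceptable, in the order given by her true preference,
only her acceptable schools that are not competitive. -/
def SemiSophProfile (ℓ : ℕ) (P : I → List (Option S)) (prio : S → List I) (q : S → ℕ)
    (P' : I → List (Option S)) : Prop :=
  ∀ i : I,
    ((∃ s : S, GuaranteedFirstChoice P prio q i s) → P' i = P i) ∧
    (¬ (∃ s : S, GuaranteedFirstChoice P prio q i s) →
      (((acceptables (P i)).length ≤ ℓ ∨ ∀ s ∈ acceptables (P i), Competitive P prio q s) →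
          P' i = P i) ∧
      (¬ ((acceptables (P i)).length ≤ ℓ ∨
            ∀ s ∈ acceptables (P i), Competitive P prio q s) →
          acceptables (P' i) =
            (acceptables (P i)).filter (fun s => decide (¬ Competitive P prio q s))))


set_option linter.unusedSectionVars false

/-! ### Generic `idxOf` lemmas (valid for any lawful `BEq`) -/

section IdxAux

variable {α : Type*} [BEq α] [LawfulBEq α]

lemma aux_idx_cons_self (a : α) (l : List α) : (a :: l).idxOf a = 0 := by
  simp [List.idxOf_cons]

lemma aux_idx_cons_ne {a b : α} (l : List α) (h : b ≠ a) :
    (b :: l).idxOf a = l.idxOf a + 1 := by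
  have hb : (b == a) = false := by simpa using h
  simp [List.idxOf_cons, hb]

lemma aux_idx_lt_len {a : α} {l : List α} : a ∈ l ↔ l.idxOf a < l.length := by
  induction l with
  | nil => simp
  | cons b t ih =>
    by_cases hb : b = a
    · subst hb; simp [aux_idx_cons_self]
    · rw [aux_idx_cons_ne _ hb]
      simp only [List.mem_cons, List.length_cons]
      constructor
      · rintro (h | h)
        · exact absurd h.symm hb
        · have := ih.1 h; omega
      · intro h; exact Or.inr (ih.2 (by omega))

lemma aux_idx_getElem {a : α} {l : List α} {n : ℕ} (hn : n < l.length)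
    (h : l.idxOf a = n) (ha : a ∈ l) : l[n] = a := by
  induction l generalizing n with
  | nil => simp at ha
  | cons b t ih =>
    by_cases hb : b = a
    · subst hb
      rw [aux_idx_cons_self] at h
      simp [← h]
    · rw [aux_idx_cons_ne _ hb] at h
      rcases n with _ | n
      · omega
      · have ha' : a ∈ t := by
          rcases List.mem_cons.1 ha with h' | h'
          · exact absurd h'.symm hb
          · exact h'
        have hn' : n < t.length := by simpa using hn
        simpa using ih hn' (by omega) ha'

lemma aux_getElem_idx {l : List α} (hl : l.Nodup) {n : ℕ} (hn : n < l.length) :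
    l.idxOf l[n] = n := by
  induction l generalizing n with
  | nil => simp at hn
  | cons b t ih =>
    rcases n with _ | n
    · simpa using aux_idx_cons_self b t
    · have hn' : n < t.length := by simpa using hn
      have hmem : t[n]'hn' ∈ t := List.getElem_mem _
      have hb : b ≠ t[n]'hn' := fun hb => (List.nodup_cons.1 hl).1 (hb ▸ hmem)
      simp only [List.getElem_cons_succ]
      rw [aux_idx_cons_ne _ hb, ih (List.nodup_cons.1 hl).2 hn']

lemma aux_idx_inj {a b : α} {l : List α} (hl : l.Nodup) (ha : a ∈ l) (hb : b ∈ l)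
    (h : l.idxOf a = l.idxOf b) : a = b := by
  have h1 := aux_idx_getElem (aux_idx_lt_len.1 ha) rfl ha
  have h2 := aux_idx_getElem (aux_idx_lt_len.1 ha) h.symm hb
  rw [← h1, ← h2]

lemma aux_idx_append_left {l₁ : List α} (l₂ : List α) {a : α} (h : a ∈ l₁) :
    (l₁ ++ l₂).idxOf a = l₁.idxOf a := by
  induction l₁ with
  | nil => simp at h
  | cons b t ih =>
    by_cases hb : b = a
    · subst hb; rw [List.cons_append, aux_idx_cons_self, aux_idx_cons_self]
    · have h' : a ∈ t := by
        rcases List.mem_cons.1 h with h' | h'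
        · exact absurd h'.symm hb
        · exact h'
      rw [List.cons_append, aux_idx_cons_ne _ hb, aux_idx_cons_ne _ hb, ih h']

lemma aux_idx_append_right {l₁ : List α} (l₂ : List α) {a : α} (h : a ∉ l₁) :
    (l₁ ++ l₂).idxOf a = l₁.length + l₂.idxOf a := by
  induction l₁ with
  | nil => simp
  | cons b t ih =>
    have hb : b ≠ a := fun hb => h (hb ▸ List.mem_cons_self (a := b) (l := t))
    rw [List.cons_append, aux_idx_cons_ne _ hb, ih (fun h' => h (List.mem_cons_of_mem _ h'))]
    simp [Nat.add_assoc]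
    omega

lemma aux_idx_take {l : List α} {m : ℕ} {a : α} (h : a ∈ l.take m) :
    l.idxOf a = (l.take m).idxOf a := by
  conv_lhs => rw [← List.take_append_drop m l]
  rw [aux_idx_append_left _ h]

lemma aux_idx_lt_of_mem_take {l : List α} {m : ℕ} {a : α} (h : a ∈ l.take m) :
    l.idxOf a < m := by
  have h1 := aux_idx_take h
  have h2 : (l.take m).idxOf a < (l.take m).length := aux_idx_lt_len.1 h
  have h3 : (l.take m).length ≤ m := by simp
  omega

lemma aux_mem_take_of_idx_lt {l : List α} {m : ℕ} {a : α} (ha : a ∈ l)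
    (h : l.idxOf a < m) : a ∈ l.take m := by
  have hlt : l.idxOf a < l.length := aux_idx_lt_len.1 ha
  have := aux_idx_getElem hlt rfl ha
  have : (l.take m)[l.idxOf a]'(by rw [List.length_take]; omega) = a := by
    rw [List.getElem_take]; exact this
  rw [← this]
  exact List.getElem_mem _

end IdxAux

/-! ### Lemmas on `acceptables` and `truncate` -/

section Aux

lemma aux_map_some_filterMap_id (l : List (Option S)) (h : ∀ x ∈ l, x.isSome) :
    (l.filterMap id).map some = l := by
  induction l with
  | nil => simp
  | cons a t ih =>
    cases a with
    | none => simpa using h none (by simp)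
    | some s =>
      simp only [List.filterMap_cons, id_eq, List.map_cons]
      exact congrArg _ (ih fun x hx => h x (List.mem_cons_of_mem _ hx))

lemma aux_takeWhile_eq (p : List (Option S)) :
    p.takeWhile Option.isSome = (acceptables p).map some :=
  (aux_map_some_filterMap_id _ (fun _ hx => List.mem_takeWhile_imp hx)).symm

lemma aux_idx_map_some (l : List S) (s : S) :
    (l.map some).idxOf (some s) = l.idxOf s := by
  induction l with
  | nil => simp
  | cons b t ih =>
    by_cases hb : b = s
    · subst hb
      rw [List.map_cons, aux_idx_cons_self, aux_idx_cons_self]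
    · rw [List.map_cons, aux_idx_cons_ne _ (by simpa using hb), aux_idx_cons_ne _ hb, ih]

variable {p : List (Option S)} {s t : S}

lemma aux_acc_nodup (hp : ValidPref p) : (acceptables p).Nodup := by
  have h1 : (p.takeWhile Option.isSome).Nodup :=
    (List.takeWhile_sublist _).nodup hp.1
  rw [aux_takeWhile_eq] at h1
  exact h1.of_map some

lemma aux_p_eq : p = (acceptables p).map some ++ p.dropWhile Option.isSome := by
  rw [← aux_takeWhile_eq, List.takeWhile_append_dropWhile]

lemma aux_drop_head (hp : ValidPref p) :
    ∃ r, p.dropWhile Option.isSome = none :: r := by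
  have hnone : (none : Option S) ∈ p.dropWhile Option.isSome := by
    have := hp.2 none
    rw [aux_p_eq (p := p)] at this
    rcases List.mem_append.1 this with h | h
    · simp at h
    · exact h
  rcases hd : p.dropWhile Option.isSome with _ | ⟨a, r⟩
  · rw [hd] at hnone; simp at hnone
  · have hfalse : ¬ (a.isSome = true) := by
      intro hsome
      exact (List.dropWhile_get_zero_not Option.isSome p (by simp [hd])) (by simp [hd, hsome])
    cases a with
    | none => exact ⟨r, rfl⟩
    | some s => simp at hfalse

lemma aux_idx_none (hp : ValidPref p) :
    p.idxOf none = (acceptables p).length := by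
  obtain ⟨r, hr⟩ := aux_drop_head hp
  conv_lhs => rw [aux_p_eq (p := p), hr]
  rw [aux_idx_append_right _ (by simp), aux_idx_cons_self]
  simp

lemma aux_idx_some_mem (hs : s ∈ acceptables p) :
    p.idxOf (some s) = (acceptables p).idxOf s := by
  conv_lhs => rw [aux_p_eq (p := p)]
  rw [aux_idx_append_left _ (List.mem_map_of_mem (f := some) hs), aux_idx_map_some]

lemma aux_idx_some_not_mem (hp : ValidPref p) (hs : s ∉ acceptables p) :
    (acceptables p).length < p.idxOf (some s) := by
  obtain ⟨r, hr⟩ := aux_drop_head hp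
  conv_rhs => rw [aux_p_eq (p := p), hr]
  rw [aux_idx_append_right _ (by
    simp only [List.mem_map]; rintro ⟨u, hu, hus⟩
    exact hs (by rwa [Option.some_inj.1 hus] at hu))]
  rw [aux_idx_cons_ne _ (by simp)]
  simp


lemma aux_takeWhile_all {l₁ : List (Option S)} (x : Option S) (l₂ : List (Option S))
    (h1 : ∀ a ∈ l₁, a.isSome) (h2 : x.isSome = false) :
    ((l₁ ++ x :: l₂).takeWhile Option.isSome) = l₁ := by
  induction l₁ with
  | nil => simp [List.takeWhile_cons, h2]
  | cons a t ih =>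
    rw [List.cons_append, List.takeWhile_cons]
    simp only [h1 a (List.mem_cons_self (a := a) (l := t)), if_true]
    rw [ih (fun b hb => h1 b (List.mem_cons_of_mem _ hb))]

lemma aux_acc_truncate (hp : ValidPref p) (m : ℕ) :
    acceptables (truncate p m) = (acceptables p).take m := by
  have h1 : ∀ a ∈ ((acceptables p).take m).map some, a.isSome = true := by
    intro a ha
    obtain ⟨u, _, rfl⟩ := List.mem_map.1 ha
    rfl
  rw [truncate, acceptables, aux_takeWhile_all _ _ h1 (by rfl : (none : Option S).isSome = false)]
  induction ((acceptables p).take m) with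
  | nil => simp
  | cons a t ih => simpa using ih

lemma aux_valid_truncate (hp : ValidPref p) (m : ℕ) : ValidPref (truncate p m) := by
  have hA : (((acceptables p).take m).map some).Nodup :=
    (((List.take_sublist m _).nodup (aux_acc_nodup hp))).map
      (fun _ _ h => Option.some_inj.1 h)
  constructor
  · rw [truncate, List.nodup_append]
    refine ⟨hA, ?_, ?_⟩
    · rw [List.nodup_cons]
      constructor
      · intro hmem
        have := (List.mem_filter.1 hmem).2
        simp at this
      · exact hp.1.filter _
    · intro x hx y hy hxy; subst hxy; revert hy
      simp only [List.mem_cons]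
      rintro (h | h)
      · subst h
        have hx' : (none : Option S) ∈ (acceptables p).map some := by
          rw [List.map_take] at hx
          simpa using List.take_subset _ _ hx
        obtain ⟨u, -, hu⟩ := List.mem_map.1 hx'
        exact Option.some_ne_none u hu
      · have := (List.mem_filter.1 h).2
        rw [decide_eq_true_iff] at this
        exact this.2 hx
  · intro x
    rw [truncate]
    cases x with
    | none => exact List.mem_append_right _ (List.mem_cons_self)
    | some s =>
      by_cases hA' : some s ∈ ((acceptables p).take m).map some
      · exact List.mem_append_left _ hA'
      · refine List.mem_append_right _ (List.mem_cons_of_mem _ (List.mem_filter.2 ⟨hp.2 _, ?_⟩))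
        rw [decide_eq_true_iff]
        exact ⟨by simp, hA'⟩

lemma aux_prefLt_some_none (hp : ValidPref p) (hs : s ∈ acceptables p) :
    prefLt p (some s) none := by
  rw [prefLt, aux_idx_some_mem hs, aux_idx_none hp]
  exact aux_idx_lt_len.1 hs

lemma aux_prefLt_acc (hp : ValidPref p) (hs : s ∈ acceptables p) (ht : t ∈ acceptables p)
    (h : (acceptables p).idxOf s < (acceptables p).idxOf t) :
    prefLt p (some s) (some t) := by
  rw [prefLt, aux_idx_some_mem hs, aux_idx_some_mem ht]; exact h

lemma aux_prefLt_none (hp : ValidPref p) (hs : s ∉ acceptables p) :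
    prefLt p none (some s) := by
  rw [prefLt, aux_idx_none hp]
  exact aux_idx_some_not_mem hp hs

lemma aux_prefLt_some_elim (hp : ValidPref p) {a : Option S}
    (h : prefLt p a (some t)) (ht : t ∈ acceptables p) :
    ∃ u, a = some u ∧ u ∈ acceptables p ∧
      (acceptables p).idxOf u < (acceptables p).idxOf t := by
  cases a with
  | none =>
    exact absurd h (by
      rw [prefLt, aux_idx_none hp, aux_idx_some_mem ht]
      have := aux_idx_lt_len.1 ht
      omega)
  | some u =>
    by_cases hu : u ∈ acceptables p
    · refine ⟨u, rfl, hu, ?_⟩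
      rwa [prefLt, aux_idx_some_mem hu, aux_idx_some_mem ht] at h
    · exact absurd h (by
        rw [prefLt, aux_idx_some_mem ht, not_lt]
        have h1 := aux_idx_some_not_mem hp hu
        have h2 := aux_idx_lt_len.1 ht
        omega)

lemma aux_prefLt_none_elim (hp : ValidPref p) {a : Option S}
    (h : prefLt p a none) : ∃ u, a = some u ∧ u ∈ acceptables p := by
  cases a with
  | none => exact absurd h (lt_irrefl _)
  | some u =>
    by_cases hu : u ∈ acceptables p
    · exact ⟨u, rfl, hu⟩
    · exact absurd h (by
        rw [prefLt, aux_idx_none hp, not_lt]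
        have := aux_idx_some_not_mem hp hu
        omega)

lemma aux_prefLt_trichotomy (hp : ValidPref p) {a b : Option S} (hne : a ≠ b)
    (h : ¬ prefLt p a b) : prefLt p b a := by
  rcases lt_trichotomy (p.idxOf b) (p.idxOf a) with h' | h' | h'
  · exact h'
  · exact absurd (aux_idx_inj hp.1 (hp.2 b) (hp.2 a) h') (fun e => hne e.symm)
  · exact absurd h' h

lemma aux_prioLt_trichotomy {pr : List I} (hpr : ValidPrio pr) {i j : I} (hne : i ≠ j)
    (h : ¬ prioLt pr i j) : prioLt pr j i := by
  rcases lt_trichotomy (pr.idxOf j) (pr.idxOf i) with h' | h' | h'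
  · exact h'
  · exact absurd (aux_idx_inj hpr.1 (hpr.2 j) (hpr.2 i) h') (fun e => hne e.symm)
  · exact absurd h' h

end Aux

/-! ### Prefix transfer lemmas -/

section Prefix

variable {p p' : List (Option S)} {m : ℕ} {s t : S}

lemma aux_acc_sub (hacc : acceptables p' = (acceptables p).take m) :
    acceptables p' ⊆ acceptables p := by
  rw [hacc]; exact List.take_subset _ _

lemma aux_rank_prefix (hacc : acceptables p' = (acceptables p).take m)
    (hs : s ∈ acceptables p') :
    (acceptables p).idxOf s = (acceptables p').idxOf s := by
  rw [hacc]; exact aux_idx_take (hacc ▸ hs)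

lemma aux_prefLt_up (hp : ValidPref p) (hp' : ValidPref p')
    (hacc : acceptables p' = (acceptables p).take m) {a b : Option S}
    (h : prefLt p' a b) (hb : ∀ u, b = some u → u ∈ acceptables p') :
    prefLt p a b := by
  cases b with
  | none =>
    obtain ⟨u, rfl, hu⟩ := aux_prefLt_none_elim hp' h
    exact aux_prefLt_some_none hp (aux_acc_sub hacc hu)
  | some v =>
    have hv := hb v rfl
    obtain ⟨u, rfl, hu, hlt⟩ := aux_prefLt_some_elim hp' h hv
    refine aux_prefLt_acc hp (aux_acc_sub hacc hu) (aux_acc_sub hacc hv) ?_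
    rwa [aux_rank_prefix hacc hu, aux_rank_prefix hacc hv]

lemma aux_prefLt_down (hp : ValidPref p) (hp' : ValidPref p')
    (hacc : acceptables p' = (acceptables p).take m) {a : Option S}
    (h : prefLt p a (some t)) (ht : t ∈ acceptables p') :
    prefLt p' a (some t) := by
  obtain ⟨u, rfl, hu, hlt⟩ := aux_prefLt_some_elim hp h (aux_acc_sub hacc ht)
  have htm : (acceptables p).idxOf t < m := aux_idx_lt_of_mem_take (hacc ▸ ht)
  have hum : u ∈ acceptables p' := by
    rw [hacc]; exact aux_mem_take_of_idx_lt hu (by omega)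
  refine aux_prefLt_acc hp' hum ht ?_
  rwa [← aux_rank_prefix hacc hum, ← aux_rank_prefix hacc ht]

end Prefix

/-! ### The deferred-acceptance engine -/

section Engine

variable (R : I → List (Option S)) (prio : S → List I) (q : S → ℕ)

/-- The current applicant pool of school `s`. -/
def daApp (σ : I → ℕ) (s : S) : List I :=
  (prio s).filter (fun j => decide (daTarget R σ j = some s))

lemma daHeld_eq (σ : I → ℕ) (s : S) :
    daHeld R prio q σ s = (daApp R prio σ s).take (q s) := rfl

variable {R prio q}

lemma aux_target_some {σ : I → ℕ} {j : I} {s : S} (hR : ∀ j, ValidPref (R j))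
    (h : daTarget R σ j = some s) :
    s ∈ acceptables (R j) ∧ (acceptables (R j)).idxOf s = σ j ∧
      σ j < (acceptables (R j)).length := by
  rw [daTarget] at h
  rw [List.getElem?_eq_some_iff] at h
  obtain ⟨hlt, hget⟩ := h
  exact ⟨hget ▸ List.getElem_mem _, hget ▸ aux_getElem_idx (aux_acc_nodup (hR j)) hlt, hlt⟩

lemma aux_target_none {σ : I → ℕ} {j : I} (h : daTarget R σ j = none) :
    (acceptables (R j)).length ≤ σ j := by
  rw [daTarget, List.getElem?_eq_none_iff] at h
  exact h

lemma aux_target_of_lt {σ : I → ℕ} {j : I} (h : σ j < (acceptables (R j)).length) :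
    daTarget R σ j = some ((acceptables (R j))[σ j]'h) := by
  rw [daTarget, List.getElem?_eq_getElem h]

lemma aux_mem_daApp {σ : I → ℕ} {j : I} {s : S} (hprio : ∀ s, ValidPrio (prio s)) :
    j ∈ daApp R prio σ s ↔ daTarget R σ j = some s := by
  rw [daApp, List.mem_filter, decide_eq_true_iff]
  exact ⟨fun h => h.2, fun h => ⟨(hprio s).2 j, h⟩⟩

lemma aux_daApp_nodup {σ : I → ℕ} {s : S} (hprio : ∀ s, ValidPrio (prio s)) :
    (daApp R prio σ s).Nodup := (hprio s).1.filter _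

lemma aux_pairwise_idx {α : Type*} [BEq α] [LawfulBEq α] {l : List α} (hl : l.Nodup) :
    l.Pairwise (fun a b => l.idxOf a < l.idxOf b) := by
  rw [List.pairwise_iff_getElem]
  intro i j hi hj hij
  rw [aux_getElem_idx hl hi, aux_getElem_idx hl hj]
  exact hij

lemma aux_daApp_pairwise {σ : I → ℕ} {s : S} (hprio : ∀ s, ValidPrio (prio s)) :
    (daApp R prio σ s).Pairwise (prioLt (prio s)) :=
  List.Pairwise.sublist List.filter_sublist (aux_pairwise_idx (hprio s).1)

lemma aux_daStep_or (σ : I → ℕ) (j : I) :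
    daStep R prio q σ j = σ j ∨ (daStep R prio q σ j = σ j + 1 ∧
      ∃ s, daTarget R σ j = some s ∧ j ∉ daHeld R prio q σ s) := by
  unfold daStep
  rcases h : daTarget R σ j with _ | s
  · exact Or.inl rfl
  · by_cases hm : j ∈ daHeld R prio q σ s
    · exact Or.inl (if_pos hm)
    · exact Or.inr ⟨if_neg hm, s, rfl, hm⟩

lemma aux_daStep_le (σ : I → ℕ) (j : I) : σ j ≤ daStep R prio q σ j := by
  rcases aux_daStep_or (R := R) (prio := prio) (q := q) σ j with h | ⟨h, _⟩ <;> omega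

lemma aux_daStep_le' (σ : I → ℕ) (j : I) : daStep R prio q σ j ≤ σ j + 1 := by
  rcases aux_daStep_or (R := R) (prio := prio) (q := q) σ j with h | ⟨h, _⟩ <;> omega

lemma aux_held_persist {σ : I → ℕ} {s : S} {j : I} (hprio : ∀ s, ValidPrio (prio s))
    (h : j ∈ daHeld R prio q σ s) : daStep R prio q σ j = σ j ∧
      daTarget R (daStep R prio q σ) j = some s := by
  have happ : j ∈ daApp R prio σ s := List.take_subset _ _ h
  have htar : daTarget R σ j = some s := (aux_mem_daApp hprio).1 happ
  have hstep : daStep R prio q σ j = σ j := by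
    have : daStep R prio q σ j = if j ∈ daHeld R prio q σ s then σ j else σ j + 1 := by
      unfold daStep; rw [htar]
    rw [this, if_pos h]
  constructor
  · exact hstep
  · rw [daTarget, hstep, ← daTarget, htar]

lemma aux_rejected_held {σ : I → ℕ} {s : S} {j : I} (hprio : ∀ s, ValidPrio (prio s))
    (hj : j ∈ daApp R prio σ s) (hnj : j ∉ daHeld R prio q σ s) :
    (daHeld R prio q σ s).length = q s ∧
      ∀ j' ∈ daHeld R prio q σ s, prioLt (prio s) j' j := by
  set A := daApp R prio σ s with hA
  have hsplit : A.take (q s) ++ A.drop (q s) = A := List.take_append_drop _ _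
  have hjd : j ∈ A.drop (q s) := by
    have := hj
    rw [← hsplit] at this
    rcases List.mem_append.1 this with h | h
    · exact absurd h hnj
    · exact h
  have hlen : q s < A.length := by
    by_contra hle
    rw [List.drop_eq_nil_of_le (by omega)] at hjd
    simp at hjd
  have hpw : (A.take (q s) ++ A.drop (q s)).Pairwise (prioLt (prio s)) := by
    rw [hsplit]; exact aux_daApp_pairwise hprio
  refine ⟨by rw [daHeld_eq, ← hA, List.length_take]; omega, fun j' hj' => ?_⟩
  exact (List.pairwise_append.1 hpw).2.2 j' hj' j hjd

lemma aux_take_filter {l : List I} {r : I → I → Prop} (hpw : l.Pairwise r) (p : I → Bool)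
    (hdc : ∀ a b, r a b → p b = true → p a = true) {k : ℕ} (hk : k ≤ (l.filter p).length) :
    (l.take k).length = k ∧ ∀ x ∈ l.take k, p x = true := by
  induction l generalizing k with
  | nil =>
    simp only [List.filter_nil, List.length_nil, Nat.le_zero] at hk
    subst hk; simp
  | cons a t ih =>
    rcases k with _ | k
    · simp
    · by_cases hpa : p a = true
      · rw [List.filter_cons_of_pos hpa] at hk
        obtain ⟨hl1, hl2⟩ := ih (List.pairwise_cons.1 hpw).2 (by simpa using hk)
        refine ⟨by simpa using hl1, ?_⟩
        intro x hx
        rcases List.mem_cons.1 (by simpa using hx) with rfl | hx'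
        · exact hpa
        · exact hl2 x hx'
      · exfalso
        rw [List.filter_cons_of_neg hpa] at hk
        have hne : t.filter p ≠ [] := by
          intro hnil; rw [hnil] at hk; simp at hk
        obtain ⟨x, hx⟩ := List.exists_mem_of_ne_nil _ hne
        have hx' := List.mem_filter.1 hx
        exact hpa (hdc a x ((List.pairwise_cons.1 hpw).1 x hx'.1) hx'.2)

lemma aux_sub_length {l₁ l₂ : List I} (h1 : l₁.Nodup) (h : l₁ ⊆ l₂) :
    l₁.length ≤ l₂.length :=
  (List.subperm_of_subset h1 h).length_le

/-- The central invariant of deferred acceptance: once a student has been rejected by a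
school, that school always has a full cohort of applicants with higher priority. -/
def daInv (R : I → List (Option S)) (prio : S → List I) (q : S → ℕ) (σ : I → ℕ) : Prop :=
  ∀ j s t, t < σ j → (acceptables (R j))[t]? = some s →
    q s ≤ ((daApp R prio σ s).filter (fun j' => decide (prioLt (prio s) j' j))).length

lemma aux_daInv_step (hR : ∀ j, ValidPref (R j)) (hprio : ∀ s, ValidPrio (prio s))
    {σ : I → ℕ} (hinv : daInv R prio q σ) : daInv R prio q (daStep R prio q σ) := by
  intro j s t ht hacc
  -- first produce the held cohort at `σ`
  have hheld : (daHeld R prio q σ s).length = q s ∧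
      ∀ j' ∈ daHeld R prio q σ s, prioLt (prio s) j' j := by
    by_cases htj : t < σ j
    · have hold := hinv j s t htj hacc
      have := aux_take_filter (aux_daApp_pairwise hprio)
        (fun j' => decide (prioLt (prio s) j' j))
        (fun a b hab hb => by
          rw [decide_eq_true_iff] at hb ⊢
          exact Nat.lt_trans hab hb) hold
      rw [daHeld_eq]
      exact ⟨this.1, fun j' hj' => decide_eq_true_iff.1 (this.2 j' hj')⟩
    · -- rejection of `j` by `s` at this very step
      have h1 : daStep R prio q σ j = σ j + 1 ∧ t = σ j := by
        have := aux_daStep_le' (R := R) (prio := prio) (q := q) σ j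
        rcases aux_daStep_or (R := R) (prio := prio) (q := q) σ j with h | ⟨h, _⟩
        · omega
        · omega
      rcases aux_daStep_or (R := R) (prio := prio) (q := q) σ j with h | ⟨_, s₂, hs₂, hrej⟩
      · omega
      · have htar : daTarget R σ j = some s := by
          rw [daTarget, ← h1.2, hacc]
        have : s₂ = s := by rw [htar] at hs₂; exact (Option.some_inj.1 hs₂).symm
        subst this
        exact aux_rejected_held hprio ((aux_mem_daApp hprio).2 htar) hrej
  -- the held cohort persists
  have hsub : daHeld R prio q σ s ⊆
      (daApp R prio (daStep R prio q σ) s).filter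
        (fun j' => decide (prioLt (prio s) j' j)) := by
    intro x hx
    rw [List.mem_filter, decide_eq_true_iff]
    exact ⟨(aux_mem_daApp hprio).2 (aux_held_persist hprio hx).2, hheld.2 x hx⟩
  have hnodup : (daHeld R prio q σ s).Nodup :=
    (List.take_sublist _ _).nodup (aux_daApp_nodup hprio)
  have := aux_sub_length hnodup hsub
  omega

lemma aux_daInv_iterate (hR : ∀ j, ValidPref (R j)) (hprio : ∀ s, ValidPrio (prio s))
    (n : ℕ) : daInv R prio q ((daStep R prio q)^[n] (fun _ => 0)) := by
  induction n with
  | zero => intro j s t ht _; simp at ht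
  | succ n ih =>
    rw [Function.iterate_succ_apply']
    exact aux_daInv_step hR hprio ih

end Engine

/-! ### The Gale–Shapley outcome: fixed point, stability, key invariant -/

section Engine2

variable {R : I → List (Option S)} {prio : S → List I} {q : S → ℕ}

/-- The terminal state of the deferred-acceptance iteration. -/
def σstar (R : I → List (Option S)) (prio : S → List I) (q : S → ℕ) : I → ℕ :=
  (daStep R prio q)^[Fintype.card I * Fintype.card S + 1] (fun _ => 0)

lemma aux_iter_bound (hR : ∀ j, ValidPref (R j)) (n : ℕ) (j : I) :
    (daStep R prio q)^[n] (fun _ => 0) j ≤ (acceptables (R j)).length := by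
  induction n with
  | zero => simp
  | succ n ih =>
    rw [Function.iterate_succ_apply']
    set σ := (daStep R prio q)^[n] fun _ => 0
    rcases aux_daStep_or (R := R) (prio := prio) (q := q) σ j with h | ⟨h, s, hs, _⟩
    · omega
    · have := (aux_target_some hR hs).2.2
      omega

lemma aux_fixpoint (hR : ∀ j, ValidPref (R j)) :
    daStep R prio q (σstar R prio q) = σstar R prio q := by
  set f := daStep R prio q with hf
  set B := Fintype.card I * Fintype.card S with hB
  have hgrow : ∀ m : ℕ, (∀ m' < m, f (f^[m'] (fun _ => 0)) ≠ f^[m'] (fun _ => 0)) →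
      m ≤ ∑ j : I, f^[m] (fun _ => 0) j := by
    intro m
    induction m with
    | zero => simp
    | succ m ih =>
      intro h
      have h1 := ih (fun m' hm' => h m' (by omega))
      have hneq := h m (by omega)
      have hex : ∃ j, f (f^[m] (fun _ => 0)) j ≠ f^[m] (fun _ => 0) j := by
        by_contra hc
        push_neg at hc
        exact hneq (funext hc)
      obtain ⟨j0, hj0⟩ := hex
      have hlt : ∑ j : I, f^[m] (fun _ => 0) j < ∑ j : I, f^[m + 1] (fun _ => 0) j := by
        rw [Function.iterate_succ_apply']
        refine Finset.sum_lt_sum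
          (fun j _ => aux_daStep_le (R := R) (prio := prio) (q := q) _ j)
          ⟨j0, Finset.mem_univ _, ?_⟩
        have := aux_daStep_le (R := R) (prio := prio) (q := q) (f^[m] (fun _ => 0)) j0
        rcases this.lt_or_eq with h' | h'
        · exact h'
        · exact absurd h'.symm hj0
      omega
  have hbound : ∑ j : I, f^[B + 1] (fun _ => 0) j ≤ B := by
    calc ∑ j : I, f^[B + 1] (fun _ => 0) j ≤ ∑ _j : I, Fintype.card S :=
          Finset.sum_le_sum (fun j _ => le_trans (aux_iter_bound hR (B + 1) j)
            ((aux_acc_nodup (hR j)).length_le_card))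
    _ = B := by rw [Finset.sum_const, Finset.card_univ, smul_eq_mul, hB]
  have hnall : ¬ (∀ m' < B + 1, f (f^[m'] (fun _ => 0)) ≠ f^[m'] (fun _ => 0)) := by
    intro h
    have := hgrow (B + 1) h
    omega
  push_neg at hnall
  obtain ⟨m, hm, hfix⟩ := hnall
  have heq : f^[B + 1] (fun _ => 0) = f^[m] (fun _ => 0) := by
    have hBm : B + 1 = (B + 1 - m) + m := by omega
    rw [hBm, Function.iterate_add_apply]
    exact Function.iterate_fixed hfix _
  show f (f^[B + 1] (fun _ => 0)) = f^[B + 1] (fun _ => 0)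
  rw [heq, hfix]

lemma aux_fix_held (hR : ∀ j, ValidPref (R j)) (hprio : ∀ s, ValidPrio (prio s))
    {j : I} {s : S} (h : daTarget R (σstar R prio q) j = some s) :
    j ∈ daHeld R prio q (σstar R prio q) s := by
  by_contra hn
  have hfix := congrFun (aux_fixpoint (q := q) (prio := prio) hR) j
  have h2 : daStep R prio q (σstar R prio q) j = σstar R prio q j + 1 := by
    have hd : daStep R prio q (σstar R prio q) j =
        if j ∈ daHeld R prio q (σstar R prio q) s then σstar R prio q j
        else σstar R prio q j + 1 := by
      unfold daStep
      rw [h]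
    rw [hd, if_neg hn]
  omega

lemma aux_GS_eq (hR : ∀ j, ValidPref (R j)) (hprio : ∀ s, ValidPrio (prio s)) (j : I) :
    GS R prio q j = daTarget R (σstar R prio q) j := by
  show (match daTarget R (σstar R prio q) j with
    | none => none
    | some s => if j ∈ daHeld R prio q (σstar R prio q) s then some s else none) =
      daTarget R (σstar R prio q) j
  rcases h : daTarget R (σstar R prio q) j with _ | s
  · rfl
  · simp only [if_pos (aux_fix_held hR hprio h)]

lemma aux_matched_iff (hR : ∀ j, ValidPref (R j)) (hprio : ∀ s, ValidPrio (prio s))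
    {j : I} {s : S} :
    GS R prio q j = some s ↔ j ∈ daApp R prio (σstar R prio q) s := by
  rw [aux_GS_eq hR hprio, aux_mem_daApp hprio]

lemma aux_app_short (hR : ∀ j, ValidPref (R j)) (hprio : ∀ s, ValidPrio (prio s)) (s : S) :
    (daApp R prio (σstar R prio q) s).length ≤ q s := by
  have hsub : daApp R prio (σstar R prio q) s ⊆
      (daApp R prio (σstar R prio q) s).take (q s) := by
    intro j hj
    exact aux_fix_held hR hprio ((aux_mem_daApp hprio).1 hj)
  have h1 := aux_sub_length (aux_daApp_nodup hprio) hsub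
  have h2 : ((daApp R prio (σstar R prio q) s).take (q s)).length ≤ q s := by
    rw [List.length_take]; omega
  omega

lemma aux_length_filter_eq {l : List I} (hl : l.Nodup) (hall : ∀ j, j ∈ l) (f : I → Bool) :
    (l.filter f).length = (Finset.univ.filter (fun j => f j = true)).card := by
  classical
  rw [← List.toFinset_card_of_nodup (hl.filter f)]
  congr 1
  ext j
  simp [List.mem_filter, hall j]

lemma aux_card_matched (hR : ∀ j, ValidPref (R j)) (hprio : ∀ s, ValidPrio (prio s))
    (s : S) :
    (Finset.univ.filter (fun j => GS R prio q j = some s)).card =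
      (daApp R prio (σstar R prio q) s).length := by
  classical
  rw [daApp, aux_length_filter_eq (hprio s).1 (hprio s).2]
  congr 1
  ext j
  simp only [Finset.mem_filter, Finset.mem_univ, true_and, decide_eq_true_iff]
  rw [aux_GS_eq hR hprio]

theorem aux_GS_matching (hR : ∀ j, ValidPref (R j)) (hprio : ∀ s, ValidPrio (prio s)) :
    IsMatching q (GS R prio q) := by
  intro s
  rw [aux_card_matched hR hprio]
  exact aux_app_short hR hprio s

theorem aux_GS_stable (hR : ∀ j, ValidPref (R j)) (hprio : ∀ s, ValidPrio (prio s)) :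
    IsStable R prio q (GS R prio q) := by
  constructor
  · intro j
    rcases h : GS R prio q j with _ | s
    · exact lt_irrefl _
    · have hs : s ∈ acceptables (R j) :=
        (aux_target_some hR ((aux_GS_eq hR hprio j).symm.trans h)).1
      exact Nat.lt_asymm (aux_prefLt_some_none (hR j) hs)
  · rintro j ⟨s, hpl, hcond⟩
    have hfixtar := aux_GS_eq (q := q) hR hprio j
    have hkey : s ∈ acceptables (R j) ∧
        (acceptables (R j)).idxOf s < σstar R prio q j := by
      rcases h : GS R prio q j with _ | s''
      · rw [h] at hpl
        obtain ⟨u, hu, humem⟩ := aux_prefLt_none_elim (hR j) hpl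
        obtain rfl : u = s := by injection hu with hu; exact hu.symm
        have hlen : (acceptables (R j)).length ≤ σstar R prio q j :=
          aux_target_none (hfixtar ▸ h)
        have := aux_idx_lt_len.1 humem
        exact ⟨humem, by omega⟩
      · rw [h] at hpl
        have htar : daTarget R (σstar R prio q) j = some s'' := hfixtar ▸ h
        obtain ⟨hmem'', hidx'', _⟩ := aux_target_some hR htar
        obtain ⟨u, hu, humem, hlt⟩ := aux_prefLt_some_elim (hR j) hpl hmem''
        obtain rfl : u = s := by injection hu with hu; exact hu.symm
        exact ⟨humem, by omega⟩
    obtain ⟨hs_acc, hlt⟩ := hkey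
    have hget : (acceptables (R j))[(acceptables (R j)).idxOf s]? = some s := by
      rw [List.getElem?_eq_getElem (aux_idx_lt_len.1 hs_acc)]
      exact congrArg some (aux_idx_getElem (aux_idx_lt_len.1 hs_acc) rfl hs_acc)
    have hq : q s ≤ ((daApp R prio (σstar R prio q) s).filter
        (fun j' => decide (prioLt (prio s) j' j))).length :=
      aux_daInv_iterate hR hprio (Fintype.card I * Fintype.card S + 1) j s _ hlt hget
    set A := daApp R prio (σstar R prio q) s with hA
    have hshort := aux_app_short (q := q) hR hprio s
    rw [← hA] at hshort
    have hfsub : List.Sublist (A.filter (fun j' => decide (prioLt (prio s) j' j))) A :=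
      List.filter_sublist
    have hflen := hfsub.length_le
    have hAq : A.length = q s := by omega
    have hfeq : A.filter (fun j' => decide (prioLt (prio s) j' j)) = A :=
      hfsub.eq_of_length (by omega)
    have hallbeat : ∀ x ∈ A, prioLt (prio s) x j := by
      intro x hx
      rw [← hfeq] at hx
      exact decide_eq_true_iff.1 (List.mem_filter.1 hx).2
    rcases hcond with hslack | ⟨j₁, hj₁, hpj⟩
    · rw [aux_card_matched hR hprio, ← hA, hAq] at hslack
      omega
    · have hj₁A : j₁ ∈ A := (aux_matched_iff hR hprio).1 hj₁
      exact Nat.lt_asymm (hallbeat j₁ hj₁A) hpj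

theorem aux_GS_key (hR : ∀ j, ValidPref (R j)) (hprio : ∀ s, ValidPrio (prio s))
    (P' : I → List (Option S)) (hP' : ∀ j, ValidPref (P' j)) (α : I → Option S)
    (hαm : IsMatching q α) (hIR : IndividuallyRational P' α)
    (hnb : ∀ j, ¬ BlockingStudent P' prio q α j)
    (hpre : ∀ j, ∃ m, acceptables (R j) = (acceptables (P' j)).take m) :
    ∀ j s, α j = some s → s ∈ acceptables (R j) →
      ∃ s', GS R prio q j = some s' ∧
        (acceptables (R j)).idxOf s' ≤ (acceptables (R j)).idxOf s := by
  have hinv : ∀ n, ∀ j s, α j = some s → s ∈ acceptables (R j) →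
      (daStep R prio q)^[n] (fun _ => 0) j ≤ (acceptables (R j)).idxOf s := by
    intro n
    induction n with
    | zero => intro j s _ _; simp
    | succ n ih =>
      intro j s hα hs
      rw [Function.iterate_succ_apply']
      set σ := (daStep R prio q)^[n] fun _ => 0 with hσ
      have hold := ih j s hα hs
      rcases aux_daStep_or (R := R) (prio := prio) (q := q) σ j with h | ⟨h, s₂, hs₂, hrej⟩
      · omega
      · rcases Nat.lt_or_ge (σ j) ((acceptables (R j)).idxOf s) with hlt | hge
        · omega
        · exfalso
          have hσeq : σ j = (acceptables (R j)).idxOf s := by omega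
          have htar : daTarget R σ j = some s := by
            rw [daTarget, hσeq, List.getElem?_eq_getElem (aux_idx_lt_len.1 hs)]
            exact congrArg some (aux_idx_getElem (aux_idx_lt_len.1 hs) rfl hs)
          rw [htar] at hs₂
          have hs2s : s = s₂ := Option.some_inj.1 hs₂
          subst hs2s
          have happ : j ∈ daApp R prio σ s := (aux_mem_daApp hprio).2 htar
          obtain ⟨hlen, hbeat⟩ := aux_rejected_held hprio happ hrej
          have hheldnodup : (daHeld R prio q σ s).Nodup :=
            (List.take_sublist _ _).nodup (aux_daApp_nodup hprio)
          have hex : ∃ j' ∈ daHeld R prio q σ s, α j' ≠ some s := by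
            by_contra hc
            push_neg at hc
            classical
            have hsubset : insert j (daHeld R prio q σ s).toFinset ⊆
                Finset.univ.filter (fun x => α x = some s) := by
              intro x hx
              rcases Finset.mem_insert.1 hx with rfl | hx'
              · exact Finset.mem_filter.2 ⟨Finset.mem_univ _, hα⟩
              · exact Finset.mem_filter.2 ⟨Finset.mem_univ _, hc x (List.mem_toFinset.1 hx')⟩
            have hcard : (insert j (daHeld R prio q σ s).toFinset).card = q s + 1 := by
              rw [Finset.card_insert_of_notMem (fun hmem => hrej (List.mem_toFinset.1 hmem)),
                List.toFinset_card_of_nodup hheldnodup, hlen]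
            have h1 := Finset.card_le_card hsubset
            have h2 := hαm s
            omega
          obtain ⟨j', hj'h, hj'α⟩ := hex
          have htar' : daTarget R σ j' = some s :=
            (aux_mem_daApp hprio).1 (List.take_subset _ _ hj'h)
          obtain ⟨hj's_acc, hj'idx, _⟩ := aux_target_some hR htar'
          obtain ⟨m, hm⟩ := hpre j'
          have hpl : prefLt (P' j') (some s) (α j') := by
            rcases hα' : α j' with _ | s''
            · exact aux_prefLt_some_none (hP' j') (aux_acc_sub hm hj's_acc)
            · by_cases hs'' : s'' ∈ acceptables (R j')
              · have hle := ih j' s'' hα' hs''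
                have hne : s ≠ s'' := fun he => hj'α (he ▸ hα')
                have hlt2 : (acceptables (R j')).idxOf s <
                    (acceptables (R j')).idxOf s'' := by
                  rcases Nat.lt_or_ge ((acceptables (R j')).idxOf s)
                      ((acceptables (R j')).idxOf s'') with h' | h'
                  · exact h'
                  · exfalso
                    have heq : (acceptables (R j')).idxOf s =
                        (acceptables (R j')).idxOf s'' := by omega
                    exact hne (aux_idx_inj (aux_acc_nodup (hR j')) hj's_acc hs'' heq)
                exact aux_prefLt_up (hP' j') (hR j') hm
                  (aux_prefLt_acc (hR j') hj's_acc hs'' hlt2)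
                  (fun u hu => by injection hu with hu; exact hu ▸ hs'')
              · by_cases hs''P : s'' ∈ acceptables (P' j')
                · refine aux_prefLt_acc (hP' j') (aux_acc_sub hm hj's_acc) hs''P ?_
                  have h1 : (acceptables (P' j')).idxOf s < m :=
                    aux_idx_lt_of_mem_take (hm ▸ hj's_acc)
                  have h2 : m ≤ (acceptables (P' j')).idxOf s'' := by
                    by_contra hc2
                    push_neg at hc2
                    exact hs'' (hm ▸ aux_mem_take_of_idx_lt hs''P hc2)
                  omega
                · exact absurd (hα' ▸ aux_prefLt_none (hP' j') hs''P) (hIR j')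
          exact hnb j' ⟨s, hpl, Or.inr ⟨j, hα, hbeat j' hj'h⟩⟩
  intro j s hα hs
  have hle : σstar R prio q j ≤ (acceptables (R j)).idxOf s :=
    hinv (Fintype.card I * Fintype.card S + 1) j s hα hs
  have hlt : σstar R prio q j < (acceptables (R j)).length :=
    lt_of_le_of_lt hle (aux_idx_lt_len.1 hs)
  refine ⟨(acceptables (R j))[σstar R prio q j]'hlt, ?_, ?_⟩
  · rw [aux_GS_eq hR hprio, daTarget, List.getElem?_eq_getElem hlt]
  · rw [aux_getElem_idx (aux_acc_nodup (hR j)) hlt]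
    exact hle

end Engine2

/-! ### The comparison argument -/

section Main

variable {prio : S → List I} {q : S → ℕ}

lemma aux_block_unmatched (P : I → List (Option S)) (hP : ∀ j, ValidPref (P j))
    (hprio : ∀ s, ValidPrio (prio s)) (Rb : I → List (Option S))
    (hRbv : ∀ j, ValidPref (Rb j)) (mm : I → ℕ)
    (hacc : ∀ j, acceptables (Rb j) = (acceptables (P j)).take (mm j))
    {j : I} (hb : BlockingStudent P prio q (GS Rb prio q) j) : GS Rb prio q j = none := by
  rcases h : GS Rb prio q j with _ | s''
  · rfl
  · exfalso
    obtain ⟨s, hpl, hcond⟩ := hb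
    rw [h] at hpl
    have hs'' : s'' ∈ acceptables (Rb j) :=
      (aux_target_some hRbv ((aux_GS_eq hRbv hprio j).symm.trans h)).1
    have hpl' : prefLt (Rb j) (some s) (some s'') :=
      aux_prefLt_down (hP j) (hRbv j) (hacc j) hpl hs''
    exact (aux_GS_stable hRbv hprio).2 j ⟨s, by rw [h]; exact hpl', hcond⟩

theorem aux_main (P : I → List (Option S)) (hP : ∀ j, ValidPref (P j))
    (hprio : ∀ s, ValidPrio (prio s)) (Pb Qb : I → List (Option S)) (i : I)
    (kk ll : I → ℕ)
    (hPb : ∀ j, Pb j = truncate (P j) (kk j))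
    (hQb : ∀ j, Qb j = truncate (P j) (ll j))
    (hagree : ∀ j, j ≠ i → ll j = kk j)
    (hlei : ll i ≤ kk i)
    (μ ν : I → Option S) (hμ : μ = GS Pb prio q) (hν : ν = GS Qb prio q) :
    numBlocking P prio q μ ≤ numBlocking P prio q ν := by
  classical
  have hPbv : ∀ j, ValidPref (Pb j) := fun j => hPb j ▸ aux_valid_truncate (hP j) _
  have hQbv : ∀ j, ValidPref (Qb j) := fun j => hQb j ▸ aux_valid_truncate (hP j) _
  have haccPb : ∀ j, acceptables (Pb j) = (acceptables (P j)).take (kk j) :=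
    fun j => by rw [hPb j]; exact aux_acc_truncate (hP j) _
  have haccQb : ∀ j, acceptables (Qb j) = (acceptables (P j)).take (ll j) :=
    fun j => by rw [hQb j]; exact aux_acc_truncate (hP j) _
  have hQP : ∀ j, j ≠ i → Qb j = Pb j := fun j hj => by
    rw [hPb j, hQb j, hagree j hj]
  have hpre_i : acceptables (Qb i) = (acceptables (Pb i)).take (ll i) := by
    rw [haccQb i, haccPb i, List.take_take, min_eq_left hlei]
  have hpre : ∀ j, ∃ m, acceptables (Qb j) = (acceptables (Pb j)).take m := by
    intro j
    by_cases hj : j = i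
    · subst hj; exact ⟨ll j, hpre_i⟩
    · exact ⟨(acceptables (Pb j)).length, by rw [hQP j hj, List.take_length]⟩
  -- basic facts about μ and ν
  have hμst : IsStable Pb prio q μ := hμ ▸ aux_GS_stable hPbv hprio
  have hνst : IsStable Qb prio q ν := hν ▸ aux_GS_stable hQbv hprio
  have hμm : IsMatching q μ := hμ ▸ aux_GS_matching hPbv hprio
  have hνm : IsMatching q ν := hν ▸ aux_GS_matching hQbv hprio
  have hμmem : ∀ {j s}, μ j = some s → s ∈ acceptables (Pb j) := by
    intro j s h
    rw [hμ] at h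
    exact (aux_target_some hPbv ((aux_GS_eq hPbv hprio j).symm.trans h)).1
  have hνmem : ∀ {j s}, ν j = some s → s ∈ acceptables (Qb j) := by
    intro j s h
    rw [hν] at h
    exact (aux_target_some hQbv ((aux_GS_eq hQbv hprio j).symm.trans h)).1
  -- the key comparative-statics fact
  have hkey : ∀ j s, μ j = some s → s ∈ acceptables (Qb j) →
      ∃ s', ν j = some s' ∧
        (acceptables (Qb j)).idxOf s' ≤ (acceptables (Qb j)).idxOf s := by
    rw [hν]
    exact aux_GS_key hQbv hprio Pb hPbv μ hμm hμst.1 hμst.2 hpre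
  -- all other students weakly improve
  have hD1 : ∀ j, j ≠ i → μ j ≠ ν j → prefLt (Pb j) (ν j) (μ j) := by
    intro j hj hne
    have hQPacc : acceptables (Qb j) = acceptables (Pb j) := by rw [hQP j hj]
    rcases hμj : μ j with _ | s
    · rcases hνj : ν j with _ | s'
      · rw [hμj, hνj] at hne; exact absurd rfl hne
      · have hs' : s' ∈ acceptables (Pb j) := hQPacc ▸ hνmem hνj
        exact aux_prefLt_some_none (hPbv j) hs'
    · have hsP : s ∈ acceptables (Pb j) := hμmem hμj
      obtain ⟨s', hνj, hrank⟩ := hkey j s hμj (hQPacc ▸ hsP)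
      rw [hνj]
      have hs'P : s' ∈ acceptables (Pb j) := hQPacc ▸ hνmem hνj
      have hne' : s' ≠ s := by
        intro he
        rw [he] at hνj
        rw [hμj, hνj] at hne
        exact hne rfl
      have hstrict : (acceptables (Pb j)).idxOf s' < (acceptables (Pb j)).idxOf s := by
        rw [← hQPacc]
        rcases lt_or_eq_of_le hrank with h' | h'
        · exact h'
        · exact absurd (aux_idx_inj (aux_acc_nodup (hQbv j)) (hQPacc ▸ hs'P)
            (hQPacc ▸ hsP) h') hne'
      exact aux_prefLt_acc (hPbv j) hs'P hsP hstrict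
  -- if i is matched by ν then i also improves
  have hD2 : ∀ s, ν i = some s → μ i ≠ some s → prefLt (Pb i) (some s) (μ i) := by
    intro s hνi hμi
    have hsQ : s ∈ acceptables (Qb i) := hνmem hνi
    rcases hμi' : μ i with _ | s''
    · exact aux_prefLt_some_none (hPbv i) (aux_acc_sub hpre_i hsQ)
    · have hs''Pb : s'' ∈ acceptables (Pb i) := hμmem hμi'
      by_cases hs''Q : s'' ∈ acceptables (Qb i)
      · -- μ is stable under Qb, so GS(Qb) weakly improves upon μ for i as well
        have hIRQ : IndividuallyRational Qb μ := by
          intro j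
          by_cases hj : j = i
          · subst hj
            rw [hμi']
            exact Nat.lt_asymm (aux_prefLt_some_none (hQbv j) hs''Q)
          · rw [hQP j hj]
            exact hμst.1 j
        have hnbQ : ∀ j, ¬ BlockingStudent Qb prio q μ j := by
          rintro j ⟨s₁, hpl, hcond⟩
          by_cases hj : j = i
          · subst hj
            have hpl' : prefLt (Pb j) (some s₁) (μ j) :=
              aux_prefLt_up (hPbv j) (hQbv j) hpre_i hpl
                (fun u hu => by
                  rw [hμi'] at hu
                  injection hu with hu
                  exact hu ▸ hs''Q)
            exact hμst.2 j ⟨s₁, hpl', hcond⟩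
          · rw [hQP j hj] at hpl
            exact hμst.2 j ⟨s₁, hpl, hcond⟩
        have hkey2 := aux_GS_key hQbv hprio Qb hQbv μ hμm hIRQ hnbQ
          (fun j => ⟨(acceptables (Qb j)).length, (List.take_length).symm⟩)
        obtain ⟨s₂, hνi2, hrank⟩ := hkey2 i s'' hμi' hs''Q
        rw [hν] at hνi
        rw [hνi] at hνi2
        have hs2 : s = s₂ := Option.some_inj.1 hνi2
        subst hs2
        have hne' : s ≠ s'' := fun he => hμi (by rw [hμi', he])
        have hstrict : (acceptables (Qb i)).idxOf s < (acceptables (Qb i)).idxOf s'' := by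
          rcases lt_or_eq_of_le hrank with h' | h'
          · exact h'
          · exact absurd (aux_idx_inj (aux_acc_nodup (hQbv i)) hsQ hs''Q h') hne'
        exact aux_prefLt_up (hPbv i) (hQbv i) hpre_i
          (aux_prefLt_acc (hQbv i) hsQ hs''Q hstrict)
          (fun u hu => by injection hu with hu; exact hu ▸ hs''Q)
      · refine aux_prefLt_acc (hPbv i) (aux_acc_sub hpre_i hsQ) hs''Pb ?_
        have h1 : (acceptables (Pb i)).idxOf s < ll i :=
          aux_idx_lt_of_mem_take (hpre_i ▸ hsQ)
        have h2 : ll i ≤ (acceptables (Pb i)).idxOf s'' := by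
          by_contra hc
          push_neg at hc
          exact hs''Q (hpre_i ▸ aux_mem_take_of_idx_lt hs''Pb hc)
        omega
  -- every arrival is a strict improvement
  have hArrImp : ∀ j s, ν j = some s → μ j ≠ some s → prefLt (Pb j) (some s) (μ j) := by
    intro j s hνj hμj
    by_cases hj : j = i
    · subst hj; exact hD2 s hνj hμj
    · have := hD1 j hj (fun he => hμj (he.trans hνj))
      rwa [hνj] at this
  -- stability of μ constrains arrivals
  have hArrFull : ∀ s, (∃ j, ν j = some s ∧ μ j ≠ some s) →
      q s ≤ (Finset.univ.filter (fun j => μ j = some s)).card := by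
    rintro s ⟨j, hνj, hμj⟩
    by_contra hc
    push_neg at hc
    exact hμst.2 j ⟨s, hArrImp j s hνj hμj, Or.inl hc⟩
  have hArrBeat : ∀ s j j₁, ν j = some s → μ j ≠ some s → μ j₁ = some s →
      prioLt (prio s) j₁ j := by
    intro s j j₁ hνj hμj hμj₁
    have hne : j ≠ j₁ := fun he => hμj (he ▸ hμj₁)
    have hnp : ¬ prioLt (prio s) j j₁ := by
      intro hp
      exact hμst.2 j ⟨s, hArrImp j s hνj hμj, Or.inr ⟨j₁, hμj₁, hp⟩⟩
    exact aux_prioLt_trichotomy (hprio s) hne hnp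
  -- counting
  set Arr : S → Finset I :=
    fun s => Finset.univ.filter (fun j => ν j = some s ∧ μ j ≠ some s) with hArr
  set Dep : S → Finset I :=
    fun s => Finset.univ.filter (fun j => μ j = some s ∧ ν j ≠ some s) with hDep
  have hfill : ∀ s, (Finset.univ.filter (fun j => ν j = some s)).card + (Dep s).card =
      (Finset.univ.filter (fun j => μ j = some s)).card + (Arr s).card := by
    intro s
    have hsd1 : (Finset.univ.filter (fun j => ν j = some s)) \ Arr s =
        (Finset.univ.filter (fun j => μ j = some s)) \ Dep s := by
      ext j
      simp only [Finset.mem_sdiff, Finset.mem_filter, Finset.mem_univ, true_and, hArr, hDep]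
      tauto
    have hA : Arr s ⊆ Finset.univ.filter (fun j => ν j = some s) := by
      intro j hj
      simp only [hArr, Finset.mem_filter, Finset.mem_univ, true_and] at hj ⊢
      exact hj.1
    have hD : Dep s ⊆ Finset.univ.filter (fun j => μ j = some s) := by
      intro j hj
      simp only [hDep, Finset.mem_filter, Finset.mem_univ, true_and] at hj ⊢
      exact hj.1
    have h1 := Finset.card_sdiff_of_subset hA
    have h2 := Finset.card_sdiff_of_subset hD
    have h3 := Finset.card_le_card hA
    have h4 := Finset.card_le_card hD
    rw [hsd1] at h1
    omega
  have hcap : ∀ s, (Arr s).card ≤ (Dep s).card := by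
    intro s
    rcases Finset.eq_empty_or_nonempty (Arr s) with he | hne
    · simp [he]
    · obtain ⟨j, hj⟩ := hne
      simp only [hArr, Finset.mem_filter, Finset.mem_univ, true_and] at hj
      have h1 := hArrFull s ⟨j, hj.1, hj.2⟩
      have h2 := hνm s
      have h3 := hμm s
      have h4 := hfill s
      omega
  -- global counting: at most as many newly matched as newly unmatched
  set Xf : Finset I := Finset.univ.filter (fun j => μ j = none ∧ ν j ≠ none) with hXf
  set Yf : Finset I := Finset.univ.filter (fun j => μ j ≠ none ∧ ν j = none) with hYf
  have hXY : Xf.card ≤ Yf.card := by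
    set A' : Finset I := Finset.univ.filter (fun j => ν j ≠ μ j ∧ ν j ≠ none) with hA'
    set D' : Finset I := Finset.univ.filter (fun j => ν j ≠ μ j ∧ μ j ≠ none) with hD'
    have hAsum : A'.card = ∑ s : S, (Arr s).card := by
      have hAeq : A' = Finset.univ.biUnion (fun s => Arr s) := by
        ext j
        simp only [hA', hArr, Finset.mem_filter, Finset.mem_univ, true_and,
          Finset.mem_biUnion]
        constructor
        · rintro ⟨hne, hnn⟩
          rcases hνj : ν j with _ | s
          · exact absurd hνj hnn
          · exact ⟨s, rfl, fun hμj => hne (hνj.trans hμj.symm)⟩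
        · rintro ⟨s, hνj, hμj⟩
          refine ⟨fun he => hμj (by rw [← he]; exact hνj), ?_⟩
          rw [hνj]; simp
      rw [hAeq]
      refine Finset.card_biUnion ?_
      intro s _ t _ hst
      rw [Function.onFun, Finset.disjoint_left]
      intro j hjs hjt
      simp only [hArr, Finset.mem_filter, Finset.mem_univ, true_and] at hjs hjt
      rw [hjs.1] at hjt
      exact hst (Option.some_inj.1 hjt.1)
    have hDsum : D'.card = ∑ s : S, (Dep s).card := by
      have hDeq : D' = Finset.univ.biUnion (fun s => Dep s) := by
        ext j
        simp only [hD', hDep, Finset.mem_filter, Finset.mem_univ, true_and,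
          Finset.mem_biUnion]
        constructor
        · rintro ⟨hne, hnn⟩
          rcases hμj : μ j with _ | s
          · exact absurd hμj hnn
          · exact ⟨s, rfl, fun hνj => hne (hνj.trans hμj.symm)⟩
        · rintro ⟨s, hμj, hνj⟩
          refine ⟨fun he => hνj (by rw [he]; exact hμj), ?_⟩
          rw [hμj]; simp
      rw [hDeq]
      refine Finset.card_biUnion ?_
      intro s _ t _ hst
      rw [Function.onFun, Finset.disjoint_left]
      intro j hjs hjt
      simp only [hDep, Finset.mem_filter, Finset.mem_univ, true_and] at hjs hjt
      rw [hjs.1] at hjt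
      exact hst (Option.some_inj.1 hjt.1)
    have hAD : A'.card ≤ D'.card := by
      rw [hAsum, hDsum]
      exact Finset.sum_le_sum (fun s _ => hcap s)
    have h1 := Finset.card_inter_add_card_sdiff A' D'
    have h2 := Finset.card_inter_add_card_sdiff D' A'
    have hADX : A' \ D' = Xf := by
      ext j
      simp only [hA', hD', hXf, Finset.mem_sdiff, Finset.mem_filter, Finset.mem_univ,
        true_and, not_and]
      constructor
      · rintro ⟨⟨hne, hnn⟩, hnd⟩
        rcases hμj : μ j with _ | s
        · exact ⟨rfl, hnn⟩
        · exfalso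
          have hmn : μ j = none := not_not.1 (hnd hne)
          rw [hμj] at hmn
          cases hmn
      · rintro ⟨hμn, hνn⟩
        exact ⟨⟨fun he => hνn (he.trans hμn), hνn⟩, fun _ h2 => h2 hμn⟩
    have hDAY : D' \ A' = Yf := by
      ext j
      simp only [hA', hD', hYf, Finset.mem_sdiff, Finset.mem_filter, Finset.mem_univ,
        true_and, not_and]
      constructor
      · rintro ⟨⟨hne, hnn⟩, hnd⟩
        rcases hνj : ν j with _ | s
        · exact ⟨hnn, rfl⟩
        · exfalso
          have hmn : ν j = none := not_not.1 (hnd hne)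
          rw [hνj] at hmn
          cases hmn
      · rintro ⟨hμn, hνn⟩
        exact ⟨⟨fun he => hμn (by rw [← he]; exact hνn), hμn⟩, fun _ h2 => h2 hνn⟩
    rw [hADX] at h1
    rw [hDAY] at h2
    rw [Finset.inter_comm] at h2
    omega
  -- only student i can become newly unmatched
  have hY : ∀ j ∈ Yf, j = i := by
    intro j hj
    simp only [hYf, Finset.mem_filter, Finset.mem_univ, true_and] at hj
    obtain ⟨hμn, hνn⟩ := hj
    by_contra hji
    rcases hμj : μ j with _ | s
    · exact hμn hμj
    · have := hD1 j hji (by rw [hμj, hνn]; simp)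
      rw [hμj, hνn] at this
      exact Nat.lt_asymm (aux_prefLt_some_none (hPbv j) (hμmem hμj)) this
  -- blocking sets
  set Bμf : Finset I := Finset.univ.filter (fun j => BlockingStudent P prio q μ j)
    with hBμf
  set Bνf : Finset I := Finset.univ.filter (fun j => BlockingStudent P prio q ν j)
    with hBνf
  have hnumμ : numBlocking P prio q μ = Bμf.card := by
    have hset : {j | BlockingStudent P prio q μ j} = ↑Bμf := by
      ext j
      simp [hBμf]
    rw [numBlocking, hset, Set.ncard_coe_finset]
  have hnumν : numBlocking P prio q ν = Bνf.card := by
    have hset : {j | BlockingStudent P prio q ν j} = ↑Bνf := by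
      ext j
      simp [hBνf]
    rw [numBlocking, hset, Set.ncard_coe_finset]
  have hunmμ : ∀ j ∈ Bμf, μ j = none := by
    intro j hj
    simp only [hBμf, Finset.mem_filter, Finset.mem_univ, true_and] at hj
    rw [hμ]
    exact aux_block_unmatched P hP hprio Pb hPbv kk haccPb (hμ ▸ hj)
  -- availability of blocking schools is monotone
  have hAvail : ∀ j s, μ j = none → ν j = none → Blocks P prio q μ j s →
      Blocks P prio q ν j s := by
    rintro j s hμ0 hν0 ⟨hpl, hcond⟩
    refine ⟨by rw [hν0]; rw [hμ0] at hpl; exact hpl, ?_⟩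
    rcases hcond with hslack | ⟨j₁, hμj₁, hpj⟩
    · have hArrE : Arr s = ∅ := by
        rcases Finset.eq_empty_or_nonempty (Arr s) with he | ⟨j₂, hj₂⟩
        · exact he
        · exfalso
          simp only [hArr, Finset.mem_filter, Finset.mem_univ, true_and] at hj₂
          have := hArrFull s ⟨j₂, hj₂.1, hj₂.2⟩
          omega
      left
      have h4 := hfill s
      rw [hArrE] at h4
      simp only [Finset.card_empty] at h4
      omega
    · by_cases hν1 : ν j₁ = some s
      · exact Or.inr ⟨j₁, hν1, hpj⟩
      · rcases Finset.eq_empty_or_nonempty (Arr s) with he | ⟨j₂, hj₂⟩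
        · left
          have h4 := hfill s
          rw [he] at h4
          simp only [Finset.card_empty] at h4
          have hDep1 : 0 < (Dep s).card := by
            refine Finset.card_pos.2 ⟨j₁, ?_⟩
            simp only [hDep, Finset.mem_filter, Finset.mem_univ, true_and]
            exact ⟨hμj₁, hν1⟩
          have h3 := hμm s
          omega
        · simp only [hArr, Finset.mem_filter, Finset.mem_univ, true_and] at hj₂
          exact Or.inr ⟨j₂, hj₂.1, Nat.lt_trans hpj (hArrBeat s j₂ j₁ hj₂.1 hj₂.2 hμj₁)⟩
  have hBsub : ∀ j ∈ Bμf, ν j = none → j ∈ Bνf := by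
    intro j hj hν0
    have hμ0 := hunmμ j hj
    simp only [hBμf, Finset.mem_filter, Finset.mem_univ, true_and] at hj
    obtain ⟨s, hblk⟩ := hj
    simp only [hBνf, Finset.mem_filter, Finset.mem_univ, true_and]
    exact ⟨s, hAvail j s hμ0 hν0 hblk⟩
  have hdiff : Bμf \ Bνf ⊆ Xf := by
    intro j hj
    obtain ⟨hj1, hj2⟩ := Finset.mem_sdiff.1 hj
    have hμ0 := hunmμ j hj1
    simp only [hXf, Finset.mem_filter, Finset.mem_univ, true_and]
    refine ⟨hμ0, fun hν0 => hj2 (hBsub j hj1 hν0)⟩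
  have hsplitμ := Finset.card_inter_add_card_sdiff Bμf Bνf
  rw [hnumμ, hnumν]
  rcases Finset.eq_empty_or_nonempty (Bμf \ Bνf) with he | hne
  · have h0 : (Bμf \ Bνf).card = 0 := by rw [he]; rfl
    have h1 : (Bμf ∩ Bνf).card ≤ Bνf.card :=
      Finset.card_le_card (Finset.inter_subset_right)
    omega
  · have hXne : Xf.Nonempty := by
      obtain ⟨j, hj⟩ := hne
      exact ⟨j, hdiff hj⟩
    have hXpos : 0 < Xf.card := Finset.card_pos.2 hXne
    have hYne : Yf.Nonempty := Finset.card_pos.1 (by omega)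
    obtain ⟨j0, hj0⟩ := hYne
    have hj0i := hY j0 hj0
    subst hj0i
    simp only [hYf, Finset.mem_filter, Finset.mem_univ, true_and] at hj0
    obtain ⟨hμin, hνi0⟩ := hj0
    rcases hμi0 : μ j0 with _ | s₀
    · exact absurd hμi0 hμin
    · -- j0 (= i) is a new blocking student for ν
      have hiBν : j0 ∈ Bνf := by
        simp only [hBνf, Finset.mem_filter, Finset.mem_univ, true_and]
        refine ⟨s₀, ?_, ?_⟩
        · rw [hνi0]
          refine aux_prefLt_some_none (hP j0) ?_
          exact List.take_subset _ _ (haccPb j0 ▸ hμmem hμi0)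
        · rcases Finset.eq_empty_or_nonempty (Arr s₀) with he' | ⟨j₂, hj₂⟩
          · left
            have h4 := hfill s₀
            rw [he'] at h4
            simp only [Finset.card_empty] at h4
            have hDep1 : 0 < (Dep s₀).card := by
              refine Finset.card_pos.2 ⟨j0, ?_⟩
              simp only [hDep, Finset.mem_filter, Finset.mem_univ, true_and]
              exact ⟨hμi0, by rw [hνi0]; simp⟩
            have h3 := hμm s₀
            omega
          · simp only [hArr, Finset.mem_filter, Finset.mem_univ, true_and] at hj₂
            exact Or.inr ⟨j₂, hj₂.1, hArrBeat s₀ j₂ j0 hj₂.1 hj₂.2 hμi0⟩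
      have hiBμ : j0 ∉ Bμf := by
        intro hmem
        rw [hunmμ j0 hmem] at hμi0
        cases hμi0
      have hins : insert j0 (Bμf ∩ Bνf) ⊆ Bνf := by
        rw [Finset.insert_subset_iff]
        exact ⟨hiBν, Finset.inter_subset_right⟩
      have hcardins : (insert j0 (Bμf ∩ Bνf)).card = (Bμf ∩ Bνf).card + 1 :=
        Finset.card_insert_of_notMem (fun h => hiBμ (Finset.mem_inter.1 h).1)
      have h5 := Finset.card_le_card hins
      have h6 : (Bμf \ Bνf).card ≤ Xf.card := Finset.card_le_card hdiff
      have hYone : Yf.card ≤ 1 := by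
        refine Finset.card_le_one.2 ?_
        intro a ha b hb
        rw [hY a ha, hY b hb]
      omega

end Main
/-- Lemma 3: let `N ⊊ I`, `i ∉ N`, and `kⱼ ≥ ℓⱼ > 1`; let `μ` be
deferred acceptance where students in `N` report their `ℓ`-truncations and the others
their `k`-truncations, and let `ν` be the same except that student `i` also reports her
`ℓᵢ`-truncation. Then `ν` has at least as many blocking students under `(P,≻,q)` as
`μ`. -/
theorem numBlocking_le_of_extra_truncation
    {I S : Type*} [Fintype I] [DecidableEq I] [Fintype S] [DecidableEq S]
    (hIS : Fintype.card S < Fintype.card I)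
    (P : I → List (Option S)) (prio : S → List I) (q : S → ℕ)
    (hP : ∀ j, ValidPref (P j)) (hprio : ∀ s, ValidPrio (prio s))
    (N : Finset I) (hN : N ≠ Finset.univ) (i : I) (hi : i ∉ N)
    (lv kv : I → ℕ) (hl : ∀ j, 1 < lv j) (hlk : ∀ j, lv j ≤ kv j) :
    numBlocking P prio q
        (GS (fun j => truncate (P j) (if j ∈ N then lv j else kv j)) prio q) ≤
      numBlocking P prio q
        (GS (fun j => truncate (P j) (if j ∈ insert i N then lv j else kv j)) prio q) := by
  refine aux_main P hP hprio _ _ i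
    (fun j => if j ∈ N then lv j else kv j)
    (fun j => if j ∈ insert i N then lv j else kv j)
    (fun j => rfl) (fun j => rfl) ?_ ?_ _ _ rfl rfl
  · intro j hj
    show (if j ∈ insert i N then lv j else kv j) = (if j ∈ N then lv j else kv j)
    simp [Finset.mem_insert, hj]
  · show (if i ∈ insert i N then lv i else kv i) ≤ (if i ∈ N then lv i else kv i)
    rw [if_pos (Finset.mem_insert_self i N), if_neg hi]
    exact hlk i

end SchoolChoice
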